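/- Brooks' theorem: a connected finite simple graph that is regular of degree k, is not complete, and is not an odd cycle, has chromatic number at most k. -/

import Mathlib

open Finset

namespace BrooksProof

variable {V : Type*} [Fintype V] [DecidableEq V]

/-- The restriction of a graph to edges inside a set `s` (vertex type unchanged). -/
def res (G : SimpleGraph V) (s : Set V) : SimpleGraph V where
  Adj u w := G.Adj u w ∧ u ∈ s ∧ w ∈ s
  symm := ⟨fun u w ⟨h, hu, hw⟩ => ⟨h.symm, hw, hu⟩⟩
  loopless := ⟨fun u ⟨h, _, _⟩ => G.loopless.irrefl u h⟩

instance resDec (G : SimpleGraph V) [DecidableRel G.Adj] (s : Set V) [DecidablePred (· ∈ s)] :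
    DecidableRel (res G s).Adj := fun _ _ => instDecidableAnd

lemma res_adj {G : SimpleGraph V} {s : Set V} {u w : V} :
    (res G s).Adj u w ↔ G.Adj u w ∧ u ∈ s ∧ w ∈ s := Iff.rfl

lemma res_le {G : SimpleGraph V} {s : Set V} : res G s ≤ G := fun _ _ h => h.1

lemma res_mono {G : SimpleGraph V} {s t : Set V} (h : s ⊆ t) : res G s ≤ res G t :=
  fun _ _ ⟨ha, hu, hw⟩ => ⟨ha, h hu, h hw⟩

lemma res_res {G : SimpleGraph V} {s t : Set V} : res (res G s) t = res G (s ∩ t) := by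
  ext u w
  simp only [res_adj, Set.mem_inter_iff]
  tauto

/-- Vertices in the support of a walk starting in a set closed under adjacency stay in it. -/
lemma support_subset_of_closed {G : SimpleGraph V} {A : Set V}
    (hA : ∀ x y, G.Adj x y → x ∈ A → y ∈ A) :
    ∀ {x y : V} (p : G.Walk x y), x ∈ A → ∀ z ∈ p.support, z ∈ A := by
  intro x y p
  induction p with
  | nil => intro hx z hz; rw [SimpleGraph.Walk.support_nil, List.mem_singleton] at hz; exact hz ▸ hx
  | cons h q ih =>
      intro hx z hz
      rw [SimpleGraph.Walk.support_cons, List.mem_cons] at hz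
      rcases hz with rfl | hz
      · exact hx
      · exact ih (hA _ _ h hx) z hz

/-- Transfer a walk in `res G s` whose support lives in `t` to reachability in `res G t`. -/
lemma reachable_res_of_support {G : SimpleGraph V} {s t : Set V} {x y : V}
    (p : (res G s).Walk x y) (hsup : ∀ z ∈ p.support, z ∈ t) : (res G t).Reachable x y := by
  induction p with
  | nil => exact SimpleGraph.Reachable.refl _
  | cons h q ih =>
      simp only [SimpleGraph.Walk.support_cons, List.mem_cons] at hsup
      refine (SimpleGraph.Adj.reachable ?_).trans (ih ?_)
      · exact ⟨h.1, hsup _ (Or.inl rfl), hsup _ (Or.inr (SimpleGraph.Walk.start_mem_support _))⟩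
      · intro z hz
        exact hsup z (Or.inr hz)




section Greedy

variable (G : SimpleGraph V) [DecidableRel G.Adj] (k : ℕ) (hk : 0 < k) (m : V → ℕ)

/-- The neighbors of `v` that come earlier in the order `m`. -/
def earlier (v : V) : Finset V := univ.filter (fun u => G.Adj u v ∧ m u < m v)

lemma mem_earlier {v u : V} : u ∈ earlier G m v ↔ G.Adj u v ∧ m u < m v := by
  simp [earlier]

lemma earlier_subset (v : V) : earlier G m v ⊆ G.neighborFinset v := by
  intro u hu
  rw [SimpleGraph.mem_neighborFinset]
  exact ((mem_earlier G m).mp hu).1.symm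

/-- Greedy step function. -/
noncomputable def greedyF (v : V) (ih : ∀ u, m u < m v → Fin k) : Fin k :=
  let S : Finset (Fin k) :=
    (earlier G m v).attach.image (fun u => ih u.1 ((mem_earlier G m).mp u.2).2)
  if h : (Finset.univ \ S).Nonempty then (Finset.univ \ S).min' h else ⟨0, hk⟩

/-- Greedy coloring along the order `m`: each vertex gets the least color not used by
earlier neighbors (or `0` as a fallback). -/
noncomputable def greedy : V → Fin k :=
  WellFounded.fix (InvImage.wf m Nat.lt_wfRel.wf) (greedyF G k hk m)

lemma greedy_eq (v : V) :
    greedy G k hk m v =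
      (if h : (Finset.univ \ ((earlier G m v).image (greedy G k hk m))).Nonempty
        then (Finset.univ \ ((earlier G m v).image (greedy G k hk m))).min' h else ⟨0, hk⟩) := by
  have h0 : greedy G k hk m v = greedyF G k hk m v (fun u _ => greedy G k hk m u) :=
    WellFounded.fix_eq _ _ _
  rw [h0]
  have himg :
      ((earlier G m v).attach.image
        (fun u => greedy G k hk m u.1)) = (earlier G m v).image (greedy G k hk m) := by
    ext c
    simp [Finset.mem_image, Finset.mem_attach]
  rw [greedyF]
  simp only [himg]

lemma greedy_not_mem {v : V}
    (h : ((earlier G m v).image (greedy G k hk m)).card < k) :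
    greedy G k hk m v ∉ (earlier G m v).image (greedy G k hk m) := by
  set S := (earlier G m v).image (greedy G k hk m) with hS
  have hne : (Finset.univ \ S).Nonempty := by
    rw [← Finset.card_pos, Finset.card_sdiff_of_subset (Finset.subset_univ S)]
    have : (Finset.univ : Finset (Fin k)).card = k := by simp
    omega
  have := Finset.min'_mem _ hne
  rw [Finset.mem_sdiff] at this
  rw [greedy_eq, dif_pos hne]
  exact this.2

lemma greedy_zero {v : V} (h : earlier G m v = ∅) : greedy G k hk m v = ⟨0, hk⟩ := by
  rw [greedy_eq, h]
  have hne : (Finset.univ \ (∅ : Finset V).image (greedy G k hk m)).Nonempty := by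
    simp only [Finset.image_empty, Finset.sdiff_empty]
    exact Finset.univ_nonempty_iff.mpr ⟨⟨0, hk⟩⟩
  rw [dif_pos hne]
  refine le_antisymm (Finset.min'_le _ _ ?_) (Fin.mk_le_of_le_val (Nat.zero_le _))
  simp

/-- Validity of the greedy coloring. -/
lemma greedy_colorable (hinj : Function.Injective m)
    (hall : ∀ v, ((earlier G m v).image (greedy G k hk m)).card < k) :
    G.Colorable k := by
  have hvalid : ∀ {u v : V}, G.Adj u v → greedy G k hk m u ≠ greedy G k hk m v := by
    intro u v hadj
    rcases Nat.lt_or_ge (m u) (m v) with h | h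
    · intro he
      exact greedy_not_mem G k hk m (hall v)
        (Finset.mem_image.mpr ⟨u, (mem_earlier G m).mpr ⟨hadj, h⟩, he⟩)
    · have hlt : m v < m u := by
        rcases Nat.lt_or_ge (m v) (m u) with h' | h'
        · exact h'
        · exact absurd (hinj (le_antisymm h h')) hadj.ne'
      intro he
      exact greedy_not_mem G k hk m (hall u)
        (Finset.mem_image.mpr ⟨v, (mem_earlier G m).mpr ⟨hadj.symm, hlt⟩, he.symm⟩)
  exact ⟨SimpleGraph.Coloring.mk (greedy G k hk m) (fun hadj => hvalid hadj)⟩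

end Greedy



section Orders

noncomputable def iota : V → ℕ := fun v => ((Fintype.equivFin V) v : ℕ)

lemma iota_lt (v : V) : iota v < Fintype.card V := ((Fintype.equivFin V) v).isLt

lemma iota_inj : Function.Injective (iota (V := V)) := by
  intro u w h
  exact (Fintype.equivFin V).injective (Fin.ext h)

noncomputable def mOf (r : V → ℕ) : V → ℕ := fun v => r v * Fintype.card V + iota v

lemma mOf_lt_of_lt {r : V → ℕ} {u w : V} (h : r u < r w) : mOf r u < mOf r w := by
  have h1 : iota u < Fintype.card V := iota_lt u
  calc r u * Fintype.card V + iota u < r u * Fintype.card V + Fintype.card V := by omega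
    _ = (r u + 1) * Fintype.card V := by ring
    _ ≤ r w * Fintype.card V := Nat.mul_le_mul_right _ h
    _ ≤ r w * Fintype.card V + iota w := Nat.le_add_right _ _

lemma mOf_inj (r : V → ℕ) : Function.Injective (mOf r) := by
  intro u w h
  have hu := iota_lt u
  have hw := iota_lt w
  have hr : r u = r w := by
    by_contra hne
    rcases Nat.lt_or_ge (r u) (r w) with hlt | hge
    · exact absurd h (Nat.ne_of_lt (mOf_lt_of_lt hlt))
    · have : r w < r u := by omega
      exact absurd h.symm (Nat.ne_of_lt (mOf_lt_of_lt this))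
  have : iota u = iota w := by
    unfold mOf at h
    rw [hr] at h
    omega
  exact iota_inj this

lemma dist_lt_card {G : SimpleGraph V} {u t : V} (hr : G.Reachable u t) :
    G.dist u t < Fintype.card V := by
  obtain ⟨p, hp⟩ := hr.exists_walk_length_eq_dist
  exact lt_of_le_of_lt (SimpleGraph.dist_le p.bypass) p.bypass_isPath.length_lt

lemma exists_adj_dist_lt {G : SimpleGraph V} {u t : V} (hr : G.Reachable u t) (hne : u ≠ t) :
    ∃ w, G.Adj u w ∧ G.dist w t < G.dist u t := by
  obtain ⟨p, hp⟩ := hr.exists_walk_length_eq_dist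
  have hpos : 0 < G.dist u t := hr.pos_dist_of_ne hne
  cases p with
  | nil => exact absurd rfl hne
  | @cons _ w _ h q =>
      refine ⟨w, h, ?_⟩
      have : G.dist w t ≤ q.length := SimpleGraph.dist_le q
      rw [SimpleGraph.Walk.length_cons] at hp
      omega

end Orders

section Apps

variable (G : SimpleGraph V) [DecidableRel G.Adj]

/-- Greedy application 1: a connected-ish graph with max degree ≤ k and one vertex of
degree < k is k-colorable. -/
lemma colorable_of_low_vertex (k : ℕ) (hk : 0 < k) (t : V)
    (hdeg : ∀ v, G.degree v ≤ k) (ht : G.degree t < k)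
    (hreach : ∀ v, G.Reachable v t ∨ ∀ w, ¬ G.Adj v w) : G.Colorable k := by
  classical
  set N := Fintype.card V with hN
  set r : V → ℕ := fun u => N - G.dist u t with hr
  apply greedy_colorable G k hk (mOf r) (mOf_inj r)
  intro v
  have hsub : ∀ s : Finset V, earlier G (mOf r) v ⊆ s → s.card < k →
      ((earlier G (mOf r) v).image (greedy G k hk (mOf r))).card < k := by
    intro s hs hcard
    exact lt_of_le_of_lt (le_trans Finset.card_image_le (Finset.card_le_card hs)) hcard
  by_cases hv : v = t
  · subst hv
    exact hsub _ (earlier_subset G (mOf r) v) (lt_of_le_of_lt (by rfl) ht)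
  · rcases hreach v with hrv | hiso
    · obtain ⟨w, hadj, hdlt⟩ := exists_adj_dist_lt hrv hv
      have hdc : G.dist v t < N := dist_lt_card hrv
      have hrlt : r v < r w := by simp only [hr]; omega
      have hmlt : mOf r v < mOf r w := mOf_lt_of_lt hrlt
      have hwmem : w ∈ G.neighborFinset v := (SimpleGraph.mem_neighborFinset _ _ _).mpr hadj
      have hsub2 : earlier G (mOf r) v ⊆ (G.neighborFinset v).erase w := by
        intro u hu
        rw [mem_earlier] at hu
        rw [Finset.mem_erase]
        refine ⟨?_, (SimpleGraph.mem_neighborFinset _ _ _).mpr hu.1.symm⟩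
        rintro rfl
        omega
      refine hsub _ hsub2 ?_
      rw [Finset.card_erase_of_mem hwmem]
      have h1 : 0 < G.degree v := by
        rw [← SimpleGraph.card_neighborFinset_eq_degree]
        exact Finset.card_pos.mpr ⟨w, hwmem⟩
      have := hdeg v
      rw [← SimpleGraph.card_neighborFinset_eq_degree] at this h1
      omega
    · have : earlier G (mOf r) v = ∅ := by
        rw [Finset.eq_empty_iff_forall_notMem]
        intro u hu
        rw [mem_earlier] at hu
        exact hiso u hu.1.symm
      rw [this]
      simpa using hk

/-- Greedy application 2: the two-nonadjacent-neighbors trick. -/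
lemma colorable_of_triple (k : ℕ) (hk : 0 < k)
    (hdeg : ∀ v, G.degree v ≤ k) (a b v : V)
    (hav : G.Adj a v) (hbv : G.Adj b v) (hab : ¬ G.Adj a b) (hne : a ≠ b)
    (hreach : ∀ u, u ≠ a → u ≠ b → (res G ({a, b}ᶜ : Set V)).Reachable u v) :
    G.Colorable k := by
  classical
  set G' : SimpleGraph V := res G ({a, b}ᶜ : Set V) with hG'
  set N := Fintype.card V with hN
  set r : V → ℕ := fun u => if u = a ∨ u = b then 0 else (N + 1) - G'.dist u v with hr
  have hva : v ≠ a := fun h => G.loopless.irrefl a (h ▸ hav)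
  have hvb : v ≠ b := fun h => G.loopless.irrefl b (h ▸ hbv)
  have hrpos : ∀ u, u ≠ a → u ≠ b → 0 < r u := by
    intro u hua hub
    have hd : G'.dist u v < N := dist_lt_card (hreach u hua hub)
    simp only [hr, if_neg (by tauto : ¬(u = a ∨ u = b))]
    omega
  -- vertices of rank 0 are exactly a and b, and they have no earlier neighbors
  have hearly : ∀ x y : V, (x = a ∨ x = b) → G.Adj y x → ¬ (mOf r y < mOf r x) := by
    intro x y hx hadj hlt
    have hrx : r x = 0 := by simp [hr, hx]
    have hry : r y ≤ r x := by
      by_contra hgt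
      exact absurd (mOf_lt_of_lt (by omega : r x < r y)) (by omega)
    have hry0 : r y = 0 := by omega
    have hyab : y = a ∨ y = b := by
      by_contra hc
      push_neg at hc
      have := hrpos y hc.1 hc.2
      omega
    -- then the edge y-x is the edge a-b, contradiction
    rcases hx with rfl | rfl <;> rcases hyab with rfl | rfl
    · exact G.loopless.irrefl _ hadj
    · exact hab hadj.symm
    · exact hab hadj
    · exact G.loopless.irrefl _ hadj
  have hearlier_ab : ∀ x, (x = a ∨ x = b) → earlier G (mOf r) x = ∅ := by
    intro x hx
    rw [Finset.eq_empty_iff_forall_notMem]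
    intro u hu
    rw [mem_earlier] at hu
    exact hearly x u hx hu.1 hu.2
  apply greedy_colorable G k hk (mOf r) (mOf_inj r)
  intro w
  by_cases hwab : w = a ∨ w = b
  · rw [hearlier_ab w hwab]
    simpa using hk
  push_neg at hwab
  by_cases hwv : w = v
  · -- at v : a and b are earlier neighbors with the same color
    subst hwv
    have hga : greedy G k hk (mOf r) a = ⟨0, hk⟩ := greedy_zero _ _ _ _ (hearlier_ab a (Or.inl rfl))
    have hgb : greedy G k hk (mOf r) b = ⟨0, hk⟩ := greedy_zero _ _ _ _ (hearlier_ab b (Or.inr rfl))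
    have hra : r a = 0 := by simp [hr]
    have hrb : r b = 0 := by simp [hr]
    have hamem : a ∈ earlier G (mOf r) w := by
      rw [mem_earlier]
      exact ⟨hav, mOf_lt_of_lt (by have := hrpos w hwab.1 hwab.2; omega)⟩
    have hbmem : b ∈ earlier G (mOf r) w := by
      rw [mem_earlier]
      exact ⟨hbv, mOf_lt_of_lt (by have := hrpos w hwab.1 hwab.2; omega)⟩
    have hsub : (earlier G (mOf r) w).image (greedy G k hk (mOf r)) ⊆
        ((earlier G (mOf r) w).erase a).image (greedy G k hk (mOf r)) := by
      intro c hc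
      rw [Finset.mem_image] at hc ⊢
      obtain ⟨u, hu, hcu⟩ := hc
      by_cases hua : u = a
      · exact ⟨b, Finset.mem_erase.mpr ⟨hne.symm, hbmem⟩, by rw [← hcu, hua, hga, hgb]⟩
      · exact ⟨u, Finset.mem_erase.mpr ⟨hua, hu⟩, hcu⟩
    have hc1 : ((earlier G (mOf r) w).erase a).card < k := by
      rw [Finset.card_erase_of_mem hamem]
      have h2 : (earlier G (mOf r) w).card ≤ k := le_trans
        (Finset.card_le_card (earlier_subset G (mOf r) w)) (hdeg w)
      have h3 : 0 < (earlier G (mOf r) w).card := Finset.card_pos.mpr ⟨a, hamem⟩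
      omega
    exact lt_of_le_of_lt (le_trans (Finset.card_le_card hsub) Finset.card_image_le) hc1
  · -- generic vertex : has a later neighbor on a shortest path to v
    have hrw : G'.Reachable w v := hreach w hwab.1 hwab.2
    obtain ⟨x, hadj, hdlt⟩ := exists_adj_dist_lt hrw hwv
    have hxab : x ≠ a ∧ x ≠ b := by
      have := hadj.2.2
      simp only [Set.mem_compl_iff, Set.mem_insert_iff, Set.mem_singleton_iff] at this
      tauto
    have hdw : G'.dist w v < N := dist_lt_card hrw
    have hrlt : r w < r x := by
      simp only [hr, if_neg (by tauto : ¬(w = a ∨ w = b)), if_neg (by tauto : ¬(x = a ∨ x = b))]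
      omega
    have hGadj : G.Adj w x := hadj.1
    have hxmem : x ∈ G.neighborFinset w := (SimpleGraph.mem_neighborFinset _ _ _).mpr hGadj
    have hsub2 : earlier G (mOf r) w ⊆ (G.neighborFinset w).erase x := by
      intro u hu
      rw [mem_earlier] at hu
      rw [Finset.mem_erase]
      refine ⟨?_, (SimpleGraph.mem_neighborFinset _ _ _).mpr hu.1.symm⟩
      rintro rfl
      exact absurd (mOf_lt_of_lt hrlt) (by omega)
    have hcard : ((G.neighborFinset w).erase x).card < k := by
      rw [Finset.card_erase_of_mem hxmem]
      have h1 : 0 < (G.neighborFinset w).card := Finset.card_pos.mpr ⟨x, hxmem⟩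
      have := hdeg w
      rw [← SimpleGraph.card_neighborFinset_eq_degree] at this
      omega
    exact lt_of_le_of_lt (le_trans Finset.card_image_le (Finset.card_le_card hsub2)) hcard

end Apps

section Structure

variable (G : SimpleGraph V)

lemma mem_pair_compl {x a b : V} : x ∈ (({a, b} : Set V)ᶜ) ↔ x ≠ a ∧ x ≠ b := by
  simp [Set.mem_compl_iff, Set.mem_insert_iff]

lemma mem_single_compl {x a : V} : x ∈ (({a} : Set V)ᶜ) ↔ x ≠ a := by simp

/-- From a walk to `v`, extract a neighbor `w` of `v` reachable from the start without using `v`. -/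
lemma exists_adj_reach {v : V} :
    ∀ {z : V}, (p : G.Walk z v) → z ≠ v →
      ∃ w, G.Adj w v ∧ (res G ({v}ᶜ : Set V)).Reachable z w
  | z, SimpleGraph.Walk.nil, hz => absurd rfl hz
  | z, @SimpleGraph.Walk.cons _ _ _ y _ h q, hz => by
      by_cases hy : y = v
      · exact ⟨z, hy ▸ h, SimpleGraph.Reachable.refl _⟩
      · obtain ⟨w, hw, hr⟩ := exists_adj_reach q hy
        refine ⟨w, hw, (SimpleGraph.Adj.reachable ?_).trans hr⟩
        exact show (res G ({v}ᶜ : Set V)).Adj z y from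
          ⟨h, mem_single_compl.mpr hz, mem_single_compl.mpr hy⟩

/-- First exit from a region must use the gate. -/
lemma exit_walk {K : SimpleGraph V} {D : Set V} {c : V}
    (hgate : ∀ p q, K.Adj p q → q ∈ D → p ∈ D ∪ {c}) :
    ∀ {y z : V} (q : K.Walk y z), y ∈ D → z ∉ D → ∃ r : K.Walk c z, r.length ≤ q.length := by
  intro y z q
  induction q with
  | nil => intro hy hz; exact absurd hy hz
  | @cons y y' z h q ih =>
      intro hy hz
      by_cases hy' : y' ∈ D
      · obtain ⟨r, hr⟩ := ih hy' hz
        exact ⟨r, by rw [SimpleGraph.Walk.length_cons]; omega⟩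
      · have h2 := hgate y' y h.symm hy
        have hc : y' = c := by
          rcases h2 with h2 | h2
          · exact absurd h2 hy'
          · exact h2
        subst hc
        exact ⟨q, by rw [SimpleGraph.Walk.length_cons]; omega⟩

/-- Walks between vertices outside a region whose entries all pass through the gate `c`
can be rerouted to avoid the region entirely. -/
lemma excise_aux {K : SimpleGraph V} {D : Set V} {c : V} (hc : c ∉ D)
    (hgate : ∀ p q, K.Adj p q → q ∈ D → p ∈ D ∪ {c}) :
    ∀ (n : ℕ) {u z : V}, u ∉ D → z ∉ D → ∀ p : K.Walk u z, p.length ≤ n →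
      (res K (Dᶜ : Set V)).Reachable u z := by
  intro n
  induction n with
  | zero =>
      intro u z hu hz p hl
      have : u = z := p.eq_of_length_eq_zero (Nat.le_zero.mp hl)
      exact this ▸ SimpleGraph.Reachable.refl _
  | succ n ih =>
      intro u z hu hz p hl
      cases p with
      | nil => exact SimpleGraph.Reachable.refl _
      | @cons _ y _ h q =>
          rw [SimpleGraph.Walk.length_cons] at hl
          by_cases hy : y ∈ D
          · have huc : u = c := by
              rcases hgate u y h hy with h2 | h2
              · exact absurd h2 hu
              · exact h2
            obtain ⟨r, hr⟩ := exit_walk hgate q hy hz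
            exact huc ▸ ih hc hz r (by omega)
          · exact (SimpleGraph.Adj.reachable (res_adj.mpr ⟨h, hu, hy⟩)).trans (ih hy hz q (by omega))

lemma excise {K : SimpleGraph V} {D : Set V} {c : V} (hc : c ∉ D)
    (hgate : ∀ p q, K.Adj p q → q ∈ D → p ∈ D ∪ {c})
    {u z : V} (hu : u ∉ D) (hz : z ∉ D) (hr : K.Reachable u z) :
    (res K (Dᶜ : Set V)).Reachable u z := by
  obtain ⟨p⟩ := hr
  exact excise_aux hc hgate p.length hu hz p le_rfl

/-- The region determined by deleting `v, c` and taking everything reachable from `d`. -/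
def Dset (v c d : V) : Set V :=
  {w | w ≠ v ∧ w ≠ c ∧ (res G ({v, c}ᶜ : Set V)).Reachable w d}

/-- `(c, d)` is a separation certificate: deleting `v, c` disconnects `d` from some `z`. -/
def PP (v : V) (p : V × V) : Prop :=
  p.1 ≠ v ∧ p.2 ≠ v ∧ p.2 ≠ p.1 ∧
    ∃ z, z ≠ v ∧ z ≠ p.1 ∧ ¬ (res G ({v, p.1}ᶜ : Set V)).Reachable z p.2

lemma Dset_gate {v c d : V} (p q : V)
    (hadj : (res G ({v}ᶜ : Set V)).Adj p q) (hq : q ∈ Dset G v c d) :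
    p ∈ Dset G v c d ∪ {c} := by
  by_cases hpc : p = c
  · exact Or.inr hpc
  · refine Or.inl ⟨mem_single_compl.mp hadj.2.1, hpc, ?_⟩
    refine (SimpleGraph.Adj.reachable ?_).trans hq.2.2
    exact ⟨hadj.1, mem_pair_compl.mpr ⟨mem_single_compl.mp hadj.2.1, hpc⟩,
      mem_pair_compl.mpr ⟨hq.1, hq.2.1⟩⟩

lemma Dset_gate' {v c d : V} (p q : V)
    (hpv : p ≠ v) (hqv : q ≠ v) (hadj : G.Adj p q) (hq : q ∈ Dset G v c d) :
    p ∈ Dset G v c d ∪ {c} :=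
  Dset_gate G p q ⟨hadj, mem_single_compl.mpr hpv, mem_single_compl.mpr hqv⟩ hq

lemma mem_Dset_self {v c d : V} (hdv : d ≠ v) (hdc : d ≠ c) : d ∈ Dset G v c d :=
  ⟨hdv, hdc, SimpleGraph.Reachable.refl _⟩

/-- Key extremal lemma: a region of minimal size contains no cut vertices. -/
lemma nocut_of_min
    (hG2 : ∀ x y z : V, y ≠ x → z ≠ x → (res G ({x}ᶜ : Set V)).Reachable y z)
    (v : V) (E : Set V) {c d : V} (hP : PP G v (c, d)) (hE : Dset G v c d ⊆ E)
    (hmin : ∀ c' d', PP G v (c', d') → Dset G v c' d' ⊆ E →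
      (Dset G v c d).ncard ≤ (Dset G v c' d').ncard) :
    ∀ x ∈ Dset G v c d, ∀ y z, y ≠ v → y ≠ x → z ≠ v → z ≠ x →
      (res G ({v, x}ᶜ : Set V)).Reachable y z := by
  intro x hx y z hyv hyx hzv hzx
  by_contra hsep
  have hxv := hx.1
  have hxc := hx.2.1
  have hcv : c ≠ v := hP.1
  -- one of y, z is not reachable to c after deleting v, x
  have hz' : ∃ z', z' ≠ v ∧ z' ≠ x ∧ ¬ (res G ({v, x}ᶜ : Set V)).Reachable z' c := by
    by_contra hcon
    push_neg at hcon
    rcases Classical.em ((res G ({v, x}ᶜ : Set V)).Reachable y c) with h1 | h1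
    · rcases Classical.em ((res G ({v, x}ᶜ : Set V)).Reachable z c) with h2 | h2
      · exact hsep (h1.trans h2.symm)
      · exact h2 (hcon z hzv hzx)
    · exact h1 (hcon y hyv hyx)
  obtain ⟨z', hz'v, hz'x, hz'c⟩ := hz'
  have hcx : c ≠ x := fun h => hxc h.symm
  -- the new pair (x, z')
  have hPnew : PP G v (x, z') := ⟨hxv, hz'v, hz'x, c, hcv, hcx,
    fun h => hz'c h.symm⟩
  -- new region is strictly inside the old one
  have hsub : Dset G v x z' ⊆ Dset G v c d := by
    rintro w ⟨hwv, hwx, hwz'⟩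
    by_contra hwD
    have hwc : w ≠ c := by
      rintro rfl
      exact hz'c hwz'.symm
    -- reroute a walk from w to c in G - v around the region D
    have hreach : (res G ({v}ᶜ : Set V)).Reachable w c := hG2 v w c hwv hcv
    have hgate : ∀ p q, (res G ({v}ᶜ : Set V)).Adj p q → q ∈ Dset G v c d →
        p ∈ Dset G v c d ∪ {c} := fun p q h hq => Dset_gate G p q h hq
    have hcD : c ∉ Dset G v c d := fun h => h.2.1 rfl
    have hr2 := excise hcD hgate hwD hcD hreach
    rw [res_res] at hr2
    have hmono : ({v}ᶜ ∩ (Dset G v c d)ᶜ : Set V) ⊆ ({v, x}ᶜ : Set V) := by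
      rintro t ⟨ht1, ht2⟩
      exact mem_pair_compl.mpr ⟨mem_single_compl.mp ht1, fun h => ht2 (h ▸ hx)⟩
    have : (res G ({v, x}ᶜ : Set V)).Reachable w c := (hr2.mono (res_mono hmono))
    exact hz'c (hwz'.symm.trans this)
  have hxnot : x ∉ Dset G v x z' := fun h => h.2.1 rfl
  have hssub : Dset G v x z' ⊂ Dset G v c d := ⟨hsub, fun h => hxnot (h hx)⟩
  have hlt : (Dset G v x z').ncard < (Dset G v c d).ncard :=
    Set.ncard_lt_ncard hssub (Set.toFinite _)
  have := hmin x z' hPnew (hsub.trans hE)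
  omega

end Structure

section Cut

lemma degree_res_le {G : SimpleGraph V} [DecidableRel G.Adj] {s : Set V}
    [DecidablePred (· ∈ s)] (w : V) : (res G s).degree w ≤ G.degree w := by
  apply Finset.card_le_card
  intro x hx
  rw [SimpleGraph.mem_neighborFinset] at hx ⊢
  exact hx.1

lemma colorable_of_cut (G : SimpleGraph V) [DecidableRel G.Adj] {k : ℕ} (hk : 0 < k)
    (hconn : G.Connected) (hdeg : ∀ u, G.degree u ≤ k)
    {v y0 z0 : V} (hy0 : y0 ≠ v) (hz0 : z0 ≠ v)
    (hsep : ¬ (res G ({v}ᶜ : Set V)).Reachable y0 z0) : G.Colorable k := by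
  classical
  set Gv := res G ({v}ᶜ : Set V) with hGv
  set S : V → Set V := fun u => {w | w ≠ v ∧ Gv.Reachable w u} with hS
  have hSclosed : ∀ u, ∀ x y, Gv.Adj x y → x ∈ S u → y ∈ S u := by
    intro u x y hadj hx
    exact ⟨mem_single_compl.mp hadj.2.2, hadj.symm.reachable.trans hx.2⟩
  have hR1 : ∀ z, z ≠ v → ∃ w, G.Adj w v ∧ Gv.Reachable z w := by
    intro z hz
    have hr : G.Reachable z v := hconn.preconnected z v
    obtain ⟨p⟩ := hr
    exact exists_adj_reach G p hz
  have hprop : ∀ u, u ≠ v → ∃ C : V → Fin k,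
      (∀ x y, (res G (S u ∪ {v} : Set V)).Adj x y → C x ≠ C y) ∧ C v = ⟨0, hk⟩ := by
    intro u hu
    have hcol : (res G (S u ∪ {v} : Set V)).Colorable k := by
      apply colorable_of_low_vertex _ k hk v
      · intro w; exact le_trans (degree_res_le w) (hdeg w)
      · -- the degree of v inside the piece is < k
        have hz' : ∃ z', z' ≠ v ∧ ¬ Gv.Reachable z' u := by
          by_cases h1 : Gv.Reachable y0 u
          · exact ⟨z0, hz0, fun h2 => hsep (h1.trans h2.symm)⟩
          · exact ⟨y0, hy0, h1⟩
        obtain ⟨z', hz'v, hz'u⟩ := hz'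
        obtain ⟨w0, hw0adj, hw0r⟩ := hR1 z' hz'v
        have hw0nS : w0 ∉ S u := fun h => hz'u (hw0r.trans h.2)
        have hw0mem : w0 ∈ G.neighborFinset v := by
          rw [SimpleGraph.mem_neighborFinset]; exact hw0adj.symm
        have hsub : (res G (S u ∪ {v} : Set V)).neighborFinset v ⊆
            (G.neighborFinset v).erase w0 := by
          intro x hx
          rw [SimpleGraph.mem_neighborFinset] at hx
          rw [Finset.mem_erase, SimpleGraph.mem_neighborFinset]
          have hxS : x ∈ S u := by
            rcases hx.2.2 with h | h
            · exact h
            · exact absurd (Set.eq_of_mem_singleton h) hx.1.ne'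
          exact ⟨fun he => hw0nS (he ▸ hxS), hx.1⟩
        have h1 : (res G (S u ∪ {v} : Set V)).degree v ≤ (G.neighborFinset v).card - 1 := by
          rw [SimpleGraph.degree]
          refine le_trans (Finset.card_le_card hsub) ?_
          rw [Finset.card_erase_of_mem hw0mem]
        have h2 : 0 < (G.neighborFinset v).card := Finset.card_pos.mpr ⟨w0, hw0mem⟩
        have h3 := hdeg v
        rw [← SimpleGraph.card_neighborFinset_eq_degree] at h3
        omega
      · -- each vertex of the piece reaches v inside the piece
        intro w
        by_cases hwv : w = v
        · exact Or.inl (hwv ▸ SimpleGraph.Reachable.refl _)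
        by_cases hwS : w ∈ S u
        · left
          obtain ⟨w', hw'adj, hw'r⟩ := hR1 w hwv
          have hw'S : w' ∈ S u := ⟨hw'adj.ne, hw'r.symm.trans hwS.2⟩
          obtain ⟨p⟩ := hw'r
          have hsup := support_subset_of_closed (hSclosed u) p hwS
          have hres : (res G (S u ∪ {v} : Set V)).Reachable w w' :=
            reachable_res_of_support p (fun z hz => Or.inl (hsup z hz))
          exact hres.trans (SimpleGraph.Adj.reachable
            (res_adj.mpr ⟨hw'adj, Or.inl hw'S, Or.inr rfl⟩))
        · right
          intro x hx
          rcases hx.2.1 with h | h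
          · exact hwS h
          · exact hwv (Set.eq_of_mem_singleton h)
    obtain ⟨C0⟩ := hcol
    refine ⟨(Equiv.swap (C0 v) ⟨0, hk⟩) ∘ C0, fun x y h => ?_, Equiv.swap_apply_left _ _⟩
    exact fun he => (C0.valid h) ((Equiv.swap (C0 v) ⟨0, hk⟩).injective he)
  set prop : Set V → Prop := fun s => ∃ C : V → Fin k,
      (∀ x y, (res G (s ∪ {v} : Set V)).Adj x y → C x ≠ C y) ∧ C v = ⟨0, hk⟩ with hpropdef
  set pick : Set V → (V → Fin k) :=
    fun s => if h : prop s then h.choose else fun _ => ⟨0, hk⟩ with hpickdef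
  have hpick : ∀ s, prop s →
      (∀ x y, (res G (s ∪ {v} : Set V)).Adj x y → pick s x ≠ pick s y) ∧
        pick s v = ⟨0, hk⟩ := by
    intro s h
    simp only [hpickdef, dif_pos h]
    exact h.choose_spec
  set C : V → Fin k := fun u => if u = v then ⟨0, hk⟩ else pick (S u) u with hC
  have hSeq : ∀ x y : V, Gv.Reachable x y → S x = S y := by
    intro x y hr
    ext w
    exact ⟨fun h => ⟨h.1, h.2.trans hr⟩, fun h => ⟨h.1, h.2.trans hr.symm⟩⟩
  have hvalid : ∀ x y, G.Adj x y → C x ≠ C y := by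
    have key : ∀ x, G.Adj x v → C x ≠ C v := by
      intro x hadj
      have hx : x ≠ v := hadj.ne
      have hCx : C x = pick (S x) x := by simp only [hC, if_neg hx]
      have hCv : C v = ⟨0, hk⟩ := by simp only [hC, if_pos rfl]
      rw [hCx, hCv]
      have hp := hpick (S x) (hprop x hx)
      have hne : pick (S x) x ≠ pick (S x) v :=
        hp.1 x v (res_adj.mpr ⟨hadj, Or.inl ⟨hx, SimpleGraph.Reachable.refl _⟩, Or.inr rfl⟩)
      rw [hp.2] at hne
      exact hne
    intro x y hadj
    by_cases hy : y = v
    · exact hy ▸ key x (hy ▸ hadj)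
    · by_cases hx : x = v
      · exact fun h => (hx ▸ key y (hx ▸ hadj.symm)) h.symm
      · have hGvadj : Gv.Adj x y :=
          res_adj.mpr ⟨hadj, mem_single_compl.mpr hx, mem_single_compl.mpr hy⟩
        have hxy : S x = S y := hSeq x y hGvadj.reachable
        have hCx : C x = pick (S x) x := by simp only [hC, if_neg hx]
        have hCy : C y = pick (S x) y := by
          simp only [hC, if_neg hy]
          exact congrArg (fun s => pick s y) hxy.symm
        rw [hCx, hCy]
        exact (hpick (S x) (hprop x hx)).1 x y
          (res_adj.mpr ⟨hadj, Or.inl ⟨hx, SimpleGraph.Reachable.refl _⟩,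
            Or.inl ⟨hy, hGvadj.symm.reachable⟩⟩)
  exact ⟨SimpleGraph.Coloring.mk C (fun h => hvalid _ _ h)⟩

end Cut

section Main2a

lemma colorable_of_2a (G : SimpleGraph V) [DecidableRel G.Adj] {k : ℕ} (hk3 : 3 ≤ k)
    (hdeg : ∀ u, G.degree u = k)
    (hG2 : ∀ x y z : V, y ≠ x → z ≠ x → (res G ({x}ᶜ : Set V)).Reachable y z)
    {v x0 y0 z0 : V} (hx0v : x0 ≠ v) (hy0v : y0 ≠ v) (hy0x : y0 ≠ x0)
    (hz0v : z0 ≠ v) (hz0x : z0 ≠ x0)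
    (hsep : ¬ (res G ({v, x0}ᶜ : Set V)).Reachable y0 z0) : G.Colorable k := by
  classical
  have hk : 0 < k := by omega
  have hdegle : ∀ u, G.degree u ≤ k := fun u => (hdeg u).le
  -- first minimal region
  have hPP0 : PP G v (x0, y0) := ⟨hx0v, hy0v, hy0x, z0, hz0v, hz0x, fun h => hsep h.symm⟩
  set F : Finset (V × V) := Finset.univ.filter (fun p => PP G v p) with hF
  have hFne : F.Nonempty := ⟨(x0, y0), by
    rw [hF, Finset.mem_filter]; exact ⟨Finset.mem_univ _, hPP0⟩⟩
  obtain ⟨cd, hcdF, hcdmin⟩ :=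
    Finset.exists_min_image F (fun p => (Dset G v p.1 p.2).ncard) hFne
  obtain ⟨c, d⟩ := cd
  have hPcd : PP G v (c, d) := (Finset.mem_filter.mp hcdF).2
  have KEY1 := nocut_of_min G hG2 v Set.univ hPcd (Set.subset_univ _)
    (fun c' d' h _ => hcdmin (c', d')
      (Finset.mem_filter.mpr ⟨Finset.mem_univ _, h⟩))
  set D := Dset G v c d with hD
  obtain ⟨hcv, hdv, hdc, zw, hzwv, hzwc, hzwsep⟩ := hPcd
  have hdD : d ∈ D := mem_Dset_self G hdv hdc
  have hcD : c ∉ D := fun h => h.2.1 rfl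
  have hvD : v ∉ D := fun h => h.1 rfl
  -- second minimal region, inside the complement of D ∪ {c}
  set E : Set V := (D ∪ {c})ᶜ with hE
  have hP2 : PP G v (c, zw) := ⟨hcv, hzwv, hzwc, d, hdv, hdc, fun h => hzwsep h.symm⟩
  have hD2E : Dset G v c zw ⊆ E := by
    rintro w ⟨hwv, hwc, hwr⟩
    rw [hE, Set.mem_compl_iff]
    rintro (hw | hw)
    · exact hzwsep (hwr.symm.trans hw.2.2)
    · exact hwc (Set.eq_of_mem_singleton hw)
  set F2 : Finset (V × V) :=
    Finset.univ.filter (fun p => PP G v p ∧ Dset G v p.1 p.2 ⊆ E) with hF2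
  have hF2ne : F2.Nonempty := ⟨(c, zw), by
    rw [hF2, Finset.mem_filter]; exact ⟨Finset.mem_univ _, hP2, hD2E⟩⟩
  obtain ⟨cd', hcd'F, hcd'min⟩ :=
    Finset.exists_min_image F2 (fun p => (Dset G v p.1 p.2).ncard) hF2ne
  obtain ⟨c', d'⟩ := cd'
  have hPcd' : PP G v (c', d') := (Finset.mem_filter.mp hcd'F).2.1
  have hD'E : Dset G v c' d' ⊆ E := (Finset.mem_filter.mp hcd'F).2.2
  have KEY2 := nocut_of_min G hG2 v E hPcd' hD'E
    (fun c'' d'' h hEE => hcd'min (c'', d'')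
      (Finset.mem_filter.mpr ⟨Finset.mem_univ _, h, hEE⟩))
  set D' := Dset G v c' d' with hD'
  obtain ⟨hc'v, hd'v, hd'c', zw', hzw'v, hzw'c', hzw'sep⟩ := hPcd'
  have hd'D' : d' ∈ D' := mem_Dset_self G hd'v hd'c'
  have hc'D' : c' ∉ D' := fun h => h.2.1 rfl
  have hvD' : v ∉ D' := fun h => h.1 rfl
  have hdisj : ∀ w, w ∈ D' → w ∉ D ∧ w ≠ c := by
    intro w hw
    have := hD'E hw
    rw [hE, Set.mem_compl_iff] at this
    constructor
    · exact fun h => this (Or.inl h)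
    · exact fun h => this (Or.inr (h ▸ rfl))
  have hc'D : c' ∉ D := fun h => hzw'sep (KEY1 c' h zw' d' hzw'v hzw'c' hd'v hd'c')
  have hcD' : c ∉ D' := fun h => hzwsep (KEY2 c h zw d hzwv hzwc hdv hdc)
  -- neighbors a ∈ D and b ∈ D' of v
  have hgetnbr : ∀ cc dd : V, cc ≠ v → dd ≠ v → dd ≠ cc →
      ∃ w, G.Adj w v ∧ w ≠ v ∧ w ≠ cc ∧ (res G ({v, cc}ᶜ : Set V)).Reachable w dd := by
    intro cc dd h1 h2 h3
    have hrr : (res G ({cc}ᶜ : Set V)).Reachable dd v :=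
      hG2 cc dd v h3 (fun h => h1 h.symm)
    obtain ⟨p⟩ := hrr
    obtain ⟨w, hwadj, hwreach⟩ := exists_adj_reach (res G ({cc}ᶜ : Set V)) p h2
    have heq : res (res G ({cc}ᶜ : Set V)) ({v}ᶜ : Set V) = res G ({v, cc}ᶜ : Set V) := by
      rw [res_res]
      congr 1
      ext t
      rw [Set.mem_inter_iff, mem_single_compl, mem_single_compl, mem_pair_compl]
      tauto
    rw [heq] at hwreach
    exact ⟨w, hwadj.1, hwadj.ne, mem_single_compl.mp hwadj.2.1, hwreach.symm⟩
  obtain ⟨a, haadj, hav, hac, har⟩ := hgetnbr c d hcv hdv hdc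
  have haD : a ∈ D := ⟨hav, hac, har⟩
  obtain ⟨b, hbadj, hbv, hbc', hbr⟩ := hgetnbr c' d' hc'v hd'v hd'c'
  have hbD' : b ∈ D' := ⟨hbv, hbc', hbr⟩
  have hbnD : b ∉ D := (hdisj b hbD').1
  have hbc : b ≠ c := (hdisj b hbD').2
  have hanD' : a ∉ D' := fun h => (hdisj a h).1 haD
  have hab : a ≠ b := fun h => hbnD (h ▸ haD)
  have hca : c ≠ a := fun h => hcD (h ▸ haD)
  have hc'b : c' ≠ b := fun h => hc'D' (h ▸ hbD')
  have hnadj : ¬ G.Adj a b := by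
    intro h
    apply hbnD
    refine ⟨hbv, hbc, SimpleGraph.Reachable.trans ?_ har⟩
    exact SimpleGraph.Adj.reachable
      (res_adj.mpr ⟨h.symm, mem_pair_compl.mpr ⟨hbv, hbc⟩, mem_pair_compl.mpr ⟨hav, hac⟩⟩)
  set W := res G ({a, b}ᶜ : Set V) with hW
  -- (P1): inside D, reach the gate c avoiding a, b
  have hP1 : ∀ u, u ∈ D → u ≠ a → W.Reachable u c := by
    intro u huD hua
    have hr : (res G ({v, a}ᶜ : Set V)).Reachable u c :=
      KEY1 a haD u c huD.1 hua hcv hca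
    set D0 : Set V := ((D \ {a}) ∪ {c})ᶜ with hD0
    have hcnotD0 : c ∉ D0 := by rw [hD0]; simp
    have hgate0 : ∀ p q, (res G ({v, a}ᶜ : Set V)).Adj p q → q ∈ D0 → p ∈ D0 ∪ {c} := by
      intro p q hadj hq
      by_contra hcon
      try push_neg at hcon
      rw [Set.mem_union] at hcon
      push_neg at hcon
      obtain ⟨hp1, hp2⟩ := hcon
      rw [hD0, Set.mem_compl_iff, not_not] at hp1
      have hpD : p ∈ D \ {a} := by
        rcases hp1 with h | h
        · exact h
        · exact absurd (Set.eq_of_mem_singleton h)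
            (fun he => hp2 (Set.mem_singleton_iff.mpr he))
      have hq2 : q ∈ D ∪ {c} := Dset_gate' G q p
        ((mem_pair_compl.mp hadj.2.2).1) ((mem_pair_compl.mp hadj.2.1).1) hadj.1.symm hpD.1
      have hqa : q ≠ a := (mem_pair_compl.mp hadj.2.2).2
      rw [hD0, Set.mem_compl_iff] at hq
      apply hq
      rcases hq2 with h | h
      · exact Or.inl ⟨h, fun he => hqa (Set.eq_of_mem_singleton he)⟩
      · exact Or.inr h
    have hu0 : u ∉ D0 := by
      rw [hD0, Set.mem_compl_iff, not_not]
      exact Or.inl ⟨huD, fun he => hua (Set.eq_of_mem_singleton he)⟩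
    have hres := excise hcnotD0 hgate0 hu0 hcnotD0 hr
    rw [res_res] at hres
    refine hres.mono (res_mono ?_)
    rintro t ⟨ht1, ht2⟩
    rw [Set.mem_compl_iff, hD0, Set.mem_compl_iff, not_not] at ht2
    rw [mem_pair_compl]
    rcases ht2 with h | h
    · constructor
      · intro he; subst he; exact h.2 rfl
      · intro he; subst he; exact hbnD h.1
    · have ht : t = c := Set.eq_of_mem_singleton h
      subst ht
      exact ⟨hca, Ne.symm hbc⟩
  -- (P2): inside D', reach the gate c' avoiding a, b
  have hP2' : ∀ u, u ∈ D' → u ≠ b → W.Reachable u c' := by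
    intro u huD' hub
    have hr : (res G ({v, b}ᶜ : Set V)).Reachable u c' :=
      KEY2 b hbD' u c' huD'.1 hub hc'v hc'b
    set D0 : Set V := ((D' \ {b}) ∪ {c'})ᶜ with hD0
    have hcnotD0 : c' ∉ D0 := by rw [hD0]; simp
    have hgate0 : ∀ p q, (res G ({v, b}ᶜ : Set V)).Adj p q → q ∈ D0 → p ∈ D0 ∪ {c'} := by
      intro p q hadj hq
      by_contra hcon
      try push_neg at hcon
      rw [Set.mem_union] at hcon
      push_neg at hcon
      obtain ⟨hp1, hp2⟩ := hcon
      rw [hD0, Set.mem_compl_iff, not_not] at hp1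
      have hpD : p ∈ D' \ {b} := by
        rcases hp1 with h | h
        · exact h
        · exact absurd (Set.eq_of_mem_singleton h)
            (fun he => hp2 (Set.mem_singleton_iff.mpr he))
      have hq2 : q ∈ D' ∪ {c'} := Dset_gate' G q p
        ((mem_pair_compl.mp hadj.2.2).1) ((mem_pair_compl.mp hadj.2.1).1) hadj.1.symm hpD.1
      have hqb : q ≠ b := (mem_pair_compl.mp hadj.2.2).2
      rw [hD0, Set.mem_compl_iff] at hq
      apply hq
      rcases hq2 with h | h
      · exact Or.inl ⟨h, fun he => hqb (Set.eq_of_mem_singleton he)⟩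
      · exact Or.inr h
    have hu0 : u ∉ D0 := by
      rw [hD0, Set.mem_compl_iff, not_not]
      exact Or.inl ⟨huD', fun he => hub (Set.eq_of_mem_singleton he)⟩
    have hres := excise hcnotD0 hgate0 hu0 hcnotD0 hr
    rw [res_res] at hres
    refine hres.mono (res_mono ?_)
    rintro t ⟨ht1, ht2⟩
    rw [Set.mem_compl_iff, hD0, Set.mem_compl_iff, not_not] at ht2
    rw [mem_pair_compl]
    rcases ht2 with h | h
    · constructor
      · intro he; subst he; exact hanD' h.1
      · intro he; subst he; exact h.2 rfl
    · have ht : t = c' := Set.eq_of_mem_singleton h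
      subst ht
      exact ⟨fun he => hc'D (by rw [he]; exact haD), hc'b⟩
  -- OUT: vertices outside both regions can travel avoiding both regions
  have hOUT : ∀ u t', u ∉ D → u ∉ D' → u ≠ v → t' ∉ D → t' ∉ D' → t' ≠ v →
      W.Reachable u t' := by
    intro u t' h1 h2 h3 h4 h5 h6
    have hua : u ≠ a := fun h => h1 (h ▸ haD)
    have ht'a : t' ≠ a := fun h => h4 (h ▸ haD)
    have hr : (res G ({v, a}ᶜ : Set V)).Reachable u t' :=
      KEY1 a haD u t' h3 hua h6 ht'a
    have hg1 : ∀ p q, (res G ({v, a}ᶜ : Set V)).Adj p q → q ∈ D → p ∈ D ∪ {c} := by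
      intro p q hadj hq
      exact Dset_gate' G p q (mem_pair_compl.mp hadj.2.1).1 (mem_pair_compl.mp hadj.2.2).1
        hadj.1 hq
    have h7 := excise hcD hg1 h1 h4 hr
    rw [res_res] at h7
    have hg2 : ∀ p q, (res G (({v, a}ᶜ : Set V) ∩ Dᶜ)).Adj p q → q ∈ D' → p ∈ D' ∪ {c'} := by
      intro p q hadj hq
      exact Dset_gate' G p q (mem_pair_compl.mp hadj.2.1.1).1 (mem_pair_compl.mp hadj.2.2.1).1
        hadj.1 hq
    have h8 := excise hc'D' hg2 h2 h5 h7
    rw [res_res] at h8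
    refine h8.mono (res_mono ?_)
    rintro t ⟨⟨ht1, ht2⟩, ht3⟩
    rw [mem_pair_compl]
    exact ⟨(mem_pair_compl.mp ht1).2, fun he => ht3 (he ▸ hbD')⟩
  -- a third neighbor of v
  have hw0ex : ∃ w0, G.Adj v w0 ∧ w0 ≠ a ∧ w0 ≠ b := by
    have hcard : 3 ≤ (G.neighborFinset v).card := by
      rw [SimpleGraph.card_neighborFinset_eq_degree, hdeg v]; exact hk3
    have h1 : 1 ≤ (((G.neighborFinset v).erase a).erase b).card := by
      have e1 : (G.neighborFinset v).card - 1 ≤ ((G.neighborFinset v).erase a).card :=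
        Finset.pred_card_le_card_erase
      have e2 : ((G.neighborFinset v).erase a).card - 1 ≤
          (((G.neighborFinset v).erase a).erase b).card :=
        Finset.pred_card_le_card_erase
      omega
    have hpos : 0 < (((G.neighborFinset v).erase a).erase b).card := by omega
    obtain ⟨w0, hw0⟩ := Finset.card_pos.mp hpos
    rw [Finset.mem_erase, Finset.mem_erase, SimpleGraph.mem_neighborFinset] at hw0
    exact ⟨w0, hw0.2.2, hw0.2.1, hw0.1⟩
  obtain ⟨w0, hvw0, hw0a, hw0b⟩ := hw0ex
  have hw0v : w0 ≠ v := hvw0.ne'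
  have hva : v ≠ a := haadj.ne'
  have hvb : v ≠ b := hbadj.ne'
  have hw0vW : W.Adj w0 v := res_adj.mpr
    ⟨hvw0.symm, mem_pair_compl.mpr ⟨hw0a, hw0b⟩, mem_pair_compl.mpr ⟨hva, hvb⟩⟩
  -- outside vertices reach v
  have hmid : ∀ u, u ∉ D → u ∉ D' → u ≠ v → W.Reachable u v := by
    intro u h1 h2 h3
    by_cases hw0D : w0 ∈ D
    · have h4 : W.Reachable u c := hOUT u c h1 h2 h3 hcD hcD' hcv
      have h5 : W.Reachable w0 c := hP1 w0 hw0D hw0a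
      exact (h4.trans h5.symm).trans hw0vW.reachable
    · by_cases hw0D' : w0 ∈ D'
      · have h4 : W.Reachable u c' := hOUT u c' h1 h2 h3 hc'D hc'D' hc'v
        have h5 : W.Reachable w0 c' := hP2' w0 hw0D' hw0b
        exact (h4.trans h5.symm).trans hw0vW.reachable
      · exact (hOUT u w0 h1 h2 h3 hw0D hw0D' hw0v).trans hw0vW.reachable
  have hreach : ∀ u, u ≠ a → u ≠ b → W.Reachable u v := by
    intro u hua hub
    by_cases huv : u = v
    · exact huv ▸ SimpleGraph.Reachable.refl _
    by_cases huD : u ∈ D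
    · exact (hP1 u huD hua).trans (hmid c hcD hcD' hcv)
    by_cases huD' : u ∈ D'
    · exact (hP2' u huD' hub).trans (hmid c' hc'D hc'D' hc'v)
    · exact hmid u huD huD' huv
  exact colorable_of_triple G k hk hdegle a b v haadj hbadj hnadj hab hreach

end Main2a

section Main2b

lemma colorable_of_2b (G : SimpleGraph V) [DecidableRel G.Adj] {k : ℕ} (hk : 0 < k)
    (hconn : G.Connected) (hdegle : ∀ u, G.degree u ≤ k) (hnc : G ≠ ⊤)
    (hG3 : ∀ p q y z : V, y ≠ p → y ≠ q → z ≠ p → z ≠ q →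
      (res G ({p, q}ᶜ : Set V)).Reachable y z) :
    G.Colorable k := by
  classical
  have hpair : ∃ xy : V × V, xy.1 ≠ xy.2 ∧ ¬ G.Adj xy.1 xy.2 := by
    by_contra h
    push_neg at h
    apply hnc
    ext x y
    simp only [SimpleGraph.top_adj]
    exact ⟨fun ha => ha.ne, fun hne => h (x, y) hne⟩
  set F : Finset (V × V) := Finset.univ.filter (fun p => p.1 ≠ p.2 ∧ ¬ G.Adj p.1 p.2) with hF
  have hFne : F.Nonempty := by
    obtain ⟨xy, h1, h2⟩ := hpair
    exact ⟨xy, Finset.mem_filter.mpr ⟨Finset.mem_univ _, h1, h2⟩⟩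
  obtain ⟨xy, hmemF, hminF⟩ := Finset.exists_min_image F (fun p => G.dist p.1 p.2) hFne
  obtain ⟨x, y⟩ := xy
  obtain ⟨hxy, hnadj⟩ : x ≠ y ∧ ¬ G.Adj x y := (Finset.mem_filter.mp hmemF).2
  have hreach : G.Reachable x y := hconn.preconnected x y
  obtain ⟨p, hp⟩ := hreach.exists_walk_length_eq_dist
  cases p with
  | nil => exact absurd rfl hxy
  | @cons _ w1 _ h q =>
      cases q with
      | nil => exact absurd h hnadj
      | @cons _ w2 _ h2 q2 =>
          rw [SimpleGraph.Walk.length_cons, SimpleGraph.Walk.length_cons] at hp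
          by_cases hq2 : q2.length = 0
          · have hw2y : w2 = y := q2.eq_of_length_eq_zero hq2
            subst hw2y
            have hw1x : w1 ≠ x := h.ne'
            have hw1y : w1 ≠ w2 := h2.ne
            apply colorable_of_triple G k hk hdegle x w2 w1 h h2.symm hnadj hxy
            intro u hua hub
            exact hG3 x w2 u w1 hua hub hw1x hw1y
          · exfalso
            have hd2 : G.dist x w2 ≤ 2 := by
              have := SimpleGraph.dist_le (SimpleGraph.Walk.cons h
                (SimpleGraph.Walk.cons h2 SimpleGraph.Walk.nil))
              simpa using this
            have hxw2 : x ≠ w2 := by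
              rintro rfl
              have h9 := SimpleGraph.dist_le q2
              omega
            have hnadj2 : ¬ G.Adj x w2 := by
              intro ha
              have := SimpleGraph.dist_le (SimpleGraph.Walk.cons ha q2)
              rw [SimpleGraph.Walk.length_cons] at this
              omega
            have hmem2 : (x, w2) ∈ F :=
              Finset.mem_filter.mpr ⟨Finset.mem_univ _, hxw2, hnadj2⟩
            have h10 := hminF (x, w2) hmem2
            dsimp only at h10
            omega

end Main2b

section MainBig

lemma colorable_main (G : SimpleGraph V) [DecidableRel G.Adj] {k : ℕ} (hk3 : 3 ≤ k)
    (hconn : G.Connected) (hreg : G.IsRegularOfDegree k) (hnc : G ≠ ⊤) : G.Colorable k := by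
  classical
  have hdeg : ∀ u, G.degree u = k := hreg
  have hdegle : ∀ u, G.degree u ≤ k := fun u => (hdeg u).le
  have hk : 0 < k := by omega
  by_cases hG2 : ∀ x y z : V, y ≠ x → z ≠ x → (res G ({x}ᶜ : Set V)).Reachable y z
  · by_cases hG3 : ∀ p q y z : V, y ≠ p → y ≠ q → z ≠ p → z ≠ q →
        (res G ({p, q}ᶜ : Set V)).Reachable y z
    · exact colorable_of_2b G hk hconn hdegle hnc hG3
    · push_neg at hG3
      obtain ⟨p, q, y, z, hyp, hyq, hzp, hzq, hsep⟩ := hG3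
      have hqp : q ≠ p := by
        intro he
        rw [he] at hsep
        have hpp : ({p, p} : Set V) = ({p} : Set V) := by simp
        rw [hpp] at hsep
        exact hsep (hG2 p y z hyp hzp)
      exact colorable_of_2a G hk3 hdeg hG2 hqp hyp hyq hzp hzq hsep
  · push_neg at hG2
    obtain ⟨x, y, z, hy, hz, hsep⟩ := hG2
    exact colorable_of_cut G hk hconn hdegle hy hz hsep

end MainBig

section TwoRegular

/-- The neighbor of `cur` other than `prev` (in a 2-regular graph). -/
noncomputable def wother (G : SimpleGraph V) [DecidableRel G.Adj] (prev cur : V) : V :=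
  if h : ((G.neighborFinset cur).erase prev).Nonempty then h.choose else cur

lemma wother_spec {G : SimpleGraph V} [DecidableRel G.Adj] {prev cur : V}
    (hdeg : G.degree cur = 2) (hadj : G.Adj cur prev) :
    G.Adj cur (wother G prev cur) ∧ wother G prev cur ≠ prev ∧
      ∀ w, G.Adj cur w → w ≠ prev → w = wother G prev cur := by
  have hmem : prev ∈ G.neighborFinset cur := by
    rw [SimpleGraph.mem_neighborFinset]; exact hadj
  have hcard : ((G.neighborFinset cur).erase prev).card = 1 := by
    rw [Finset.card_erase_of_mem hmem, SimpleGraph.card_neighborFinset_eq_degree, hdeg]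
  have hne : ((G.neighborFinset cur).erase prev).Nonempty := by
    rw [← Finset.card_pos, hcard]; omega
  have hwmem : wother G prev cur ∈ (G.neighborFinset cur).erase prev := by
    rw [wother, dif_pos hne]; exact hne.choose_spec
  rw [Finset.mem_erase, SimpleGraph.mem_neighborFinset] at hwmem
  refine ⟨hwmem.2, hwmem.1, ?_⟩
  intro w hw hwp
  have hw' : w ∈ (G.neighborFinset cur).erase prev := by
    rw [Finset.mem_erase, SimpleGraph.mem_neighborFinset]; exact ⟨hwp, hw⟩
  have hwo' : wother G prev cur ∈ (G.neighborFinset cur).erase prev := by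
    rw [Finset.mem_erase, SimpleGraph.mem_neighborFinset]; exact ⟨hwmem.1, hwmem.2⟩
  exact Finset.card_le_one.mp (le_of_eq hcard) w hw' _ hwo'

/-- Walking around a 2-regular graph. -/
noncomputable def cyc (G : SimpleGraph V) [DecidableRel G.Adj] (v0 x : V) : ℕ → V
  | 0 => v0
  | 1 => x
  | (i + 2) => wother G (cyc G v0 x i) (cyc G v0 x (i + 1))

lemma nat_mod_helper {n p q : ℕ} (hn : 3 ≤ n) (hp : p < n) (hq : q < n)
    (h : q = (p + n - 1) % n) : p = (q + 1) % n := by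
  rcases Nat.eq_zero_or_pos p with hp0 | hp1
  · subst hp0
    have h1 : (0 + n - 1) % n = n - 1 := by
      rw [Nat.zero_add]
      exact Nat.mod_eq_of_lt (by omega)
    rw [h1] at h
    subst h
    have : n - 1 + 1 = n := by omega
    rw [this, Nat.mod_self]
  · have h1 : p + n - 1 = n + (p - 1) := by omega
    rw [h1, Nat.add_mod_left] at h
    have h2 : (p - 1) % n = p - 1 := Nat.mod_eq_of_lt (by omega)
    rw [h2] at h
    subst h
    have : p - 1 + 1 = p := by omega
    rw [this]
    exact (Nat.mod_eq_of_lt hp).symm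

lemma fin_succ_val {n : ℕ} (hn : 3 ≤ n) (p : Fin n) :
    haveI : NeZero n := ⟨by omega⟩
    ((p + 1 : Fin n)).val = (p.val + 1) % n := by
  haveI : NeZero n := ⟨by omega⟩
  rw [Fin.add_def]
  congr 1
  rw [Fin.val_one']
  rw [Nat.mod_eq_of_lt (by omega : 1 < n)]

lemma cycle_adj_of_succ {n : ℕ} (hn : 3 ≤ n) (p q : Fin n) (h : q.val = (p.val + 1) % n) :
    (SimpleGraph.cycleGraph n).Adj p q := by
  haveI : NeZero n := ⟨by omega⟩
  have hq : q = p + 1 := by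
    apply Fin.ext
    rw [h, fin_succ_val hn p]
  rw [SimpleGraph.cycleGraph_adj']
  right
  rw [hq]
  have : p + 1 - p = 1 := by abel
  rw [this]
  haveI : NeZero n := ⟨by omega⟩
  rw [Fin.val_one']
  exact Nat.mod_eq_of_lt (by omega : 1 < n)

lemma two_regular_iso (G : SimpleGraph V) [DecidableRel G.Adj]
    (hconn : G.Connected) (hreg : ∀ v, G.degree v = 2) :
    Nonempty (G ≃g SimpleGraph.cycleGraph (Fintype.card V)) := by
  classical
  haveI : Nonempty V := hconn.nonempty
  set n := Fintype.card V with hn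
  set v0 : V := Classical.arbitrary V with hv0
  have hx : ∃ x, x ∈ G.neighborFinset v0 := by
    have : 0 < (G.neighborFinset v0).card := by
      rw [SimpleGraph.card_neighborFinset_eq_degree, hreg]; omega
    exact Finset.card_pos.mp this
  obtain ⟨x, hxmem⟩ := hx
  rw [SimpleGraph.mem_neighborFinset] at hxmem
  set f : ℕ → V := cyc G v0 x with hf
  have hf0 : f 0 = v0 := rfl
  have hf1 : f 1 = x := rfl
  have hfstep : ∀ i, f (i + 2) = wother G (f i) (f (i + 1)) := fun i => rfl
  -- consecutive adjacency
  have A1 : ∀ i, G.Adj (f i) (f (i + 1)) := by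
    intro i
    induction i with
    | zero => exact hxmem
    | succ j ih =>
        rw [hfstep j]
        exact (wother_spec (hreg (f (j + 1))) ih.symm).1
  have A2 : ∀ i, f (i + 2) ≠ f i := by
    intro i
    rw [hfstep i]
    exact (wother_spec (hreg (f (i + 1))) (A1 i).symm).2.1
  have U : ∀ i w, G.Adj (f (i + 1)) w → w ≠ f i → w = f (i + 2) := by
    intro i w hw hwne
    rw [hfstep i]
    exact (wother_spec (hreg (f (i + 1))) (A1 i).symm).2.2 w hw hwne
  -- find the first repeat
  have hrep : ∃ i, 1 ≤ i ∧ ∃ j < i, f j = f i := by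
    have : ¬ Function.Injective (fun j : Fin (n + 1) => f j) := by
      intro hinj
      have hle := Fintype.card_le_of_injective _ hinj
      rw [Fintype.card_fin, ← hn] at hle
      omega
    rw [Function.not_injective_iff] at this
    obtain ⟨p, q, hpq, hne⟩ := this
    rcases Ne.lt_or_gt (fun h : p = q => hne (by rw [h])) with h | h
    · exact ⟨q, by omega, p, by exact_mod_cast h, hpq⟩
    · exact ⟨p, by omega, q, by exact_mod_cast h, hpq.symm⟩
  set i0 := Nat.find hrep with hi0
  obtain ⟨hi01, j, hji, hfj⟩ := Nat.find_spec hrep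
  have hinj : ∀ p q, p < q → q < i0 → f p ≠ f q := by
    intro p q hpq hq hne
    exact Nat.find_min hrep (m := q) hq ⟨by omega, p, hpq, hne⟩
  -- the first repeat closes the cycle at 0
  have hj0 : j = 0 := by
    by_contra hjne
    obtain ⟨m, rfl⟩ : ∃ m, j = m + 1 := ⟨j - 1, by omega⟩
    have hn1 : G.Adj (f (m + 1)) (f m) := (A1 m).symm
    have hn2 : G.Adj (f (m + 1)) (f (m + 2)) := A1 (m + 1)
    have hnb3 : G.Adj (f (m + 1)) (f (i0 - 1)) := by
      have h9 := A1 (i0 - 1)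
      rw [show i0 - 1 + 1 = i0 from by omega, ← hfj] at h9
      exact h9.symm
    have hd12 : f m ≠ f (m + 2) := fun h => A2 m h.symm
    have hm2 : m + 2 ≤ i0 := by omega
    have hd13 : f m ≠ f (i0 - 1) := by
      intro h
      exact hinj m (i0 - 1) (by omega) (by omega) h
    have hd23 : f (m + 2) ≠ f (i0 - 1) := by
      intro h
      rcases Nat.lt_trichotomy (m + 2) (i0 - 1) with hlt | heq | hgt
      · exact hinj (m + 2) (i0 - 1) hlt (by omega) h
      · have h1 : f (m + 3) = f (m + 1) := by
          have h2 : m + 3 = i0 := by omega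
          rw [h2, ← hfj]
        exact A2 (m + 1) h1
      · have h3 : i0 - 1 = m + 1 := by omega
        rw [h3] at h
        exact (A1 (m + 1)).ne h.symm
    have hsub : ({f m, f (m + 2), f (i0 - 1)} : Finset V) ⊆ G.neighborFinset (f (m + 1)) := by
      intro w hw
      rw [SimpleGraph.mem_neighborFinset]
      simp only [Finset.mem_insert, Finset.mem_singleton] at hw
      rcases hw with rfl | rfl | rfl
      · exact hn1
      · exact hn2
      · exact hnb3
    have hcard3 : ({f m, f (m + 2), f (i0 - 1)} : Finset V).card = 3 := by
      rw [Finset.card_insert_of_notMem, Finset.card_insert_of_notMem, Finset.card_singleton]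
      · simp only [Finset.mem_singleton]; exact hd23
      · simp only [Finset.mem_insert, Finset.mem_singleton]; push_neg; exact ⟨hd12, hd13⟩
    have hcc := Finset.card_le_card hsub
    rw [hcard3, SimpleGraph.card_neighborFinset_eq_degree, hreg] at hcc
    omega
  rw [hj0] at hfj
  have hfi0 : f i0 = f 0 := hfj.symm
  have hi03 : 3 ≤ i0 := by
    by_contra hcon
    have h1 : f 0 ≠ f 1 := (A1 0).ne
    have h2 : f 2 ≠ f 0 := A2 0
    rcases (by omega : i0 = 1 ∨ i0 = 2) with he | he
    · rw [he] at hfi0; exact h1 hfi0.symm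
    · rw [he] at hfi0; exact h2 hfi0
  -- periodicity
  have hper1 : f (i0 + 1) = f 1 := by
    have h1 : G.Adj (f 0) (f (i0 + 1)) := by
      have := A1 i0
      rw [hfi0] at this
      exact this
    have h2 : f (i0 + 1) ≠ f (i0 - 1) := by
      have h3 : G.Adj (f 0) (f (i0 - 1)) := by
        have := A1 (i0 - 1)
        rw [show i0 - 1 + 1 = i0 from by omega, hfi0] at this
        exact this.symm
      intro he
      -- f (i0 + 1) is the other neighbor of f i0 = f 0 w.r.t. f (i0 - 1)
      have h4 := A2 (i0 - 1)
      rw [show i0 - 1 + 2 = i0 + 1 from by omega] at h4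
      exact h4 (he.trans (by rw [show i0 - 1 = i0 - 1 from rfl]))
    -- uniqueness of the second neighbor of f 0
    have h5 : f 1 ≠ f (i0 - 1) := by
      intro he
      exact hinj 1 (i0 - 1) (by omega) (by omega) he
    -- both f 1 and f (i0 + 1) are neighbors of f 0 different from f (i0 - 1)
    have hdeg0 := hreg (f 0)
    have hadjprev : G.Adj (f 0) (f (i0 - 1)) := by
      have := A1 (i0 - 1)
      rw [show i0 - 1 + 1 = i0 from by omega, hfi0] at this
      exact this.symm
    obtain ⟨_, _, huniq⟩ := wother_spec hdeg0 hadjprev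
    have e1 : f 1 = wother G (f (i0 - 1)) (f 0) := huniq _ (A1 0) h5
    have e2 : f (i0 + 1) = wother G (f (i0 - 1)) (f 0) := huniq _ h1 h2
    rw [e1, ← e2]
  have hperiod : ∀ m, f (m + i0) = f m := by
    intro m
    induction m using Nat.strong_induction_on with
    | _ m ih =>
      match m with
      | 0 => rw [Nat.zero_add]; exact hfi0
      | 1 => rw [Nat.add_comm]; exact hper1
      | (l + 2) =>
          have e1 : f (l + i0) = f l := ih l (by omega)
          have e2 : f (l + 1 + i0) = f (l + 1) := ih (l + 1) (by omega)
          have : l + 2 + i0 = (l + i0) + 2 := by omega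
          rw [this, hfstep (l + i0), show l + i0 + 1 = l + 1 + i0 from by omega, e1, e2,
            ← hfstep l]
  have hmul : ∀ j m, f (m + j * i0) = f m := by
    intro j
    induction j with
    | zero => intro m; simp
    | succ l ih =>
        intro m
        have : m + (l + 1) * i0 = (m + l * i0) + i0 := by ring
        rw [this, hperiod, ih]
  have hfmod : ∀ m, f (m % i0) = f m := by
    intro m
    have h1 : m % i0 + m / i0 * i0 = m := Nat.mod_add_div' m i0
    calc f (m % i0) = f (m % i0 + m / i0 * i0) := (hmul (m / i0) (m % i0)).symm
      _ = f m := by rw [h1]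
  -- the image of [0, i0) is everything
  have hNBR : ∀ m u, G.Adj (f m) u → u = f (m + 1) ∨ u = f (m + i0 - 1) := by
    intro m
    cases m with
    | zero =>
        intro u hadj
        by_cases hu : u = f (i0 - 1)
        · right
          rw [hu]
          congr 1
          omega
        · left
          have hadjprev : G.Adj (f 0) (f (i0 - 1)) := by
            have h9 := A1 (i0 - 1)
            rw [show i0 - 1 + 1 = i0 from by omega, hfi0] at h9
            exact h9.symm
          obtain ⟨_, _, huniq⟩ := wother_spec (hreg (f 0)) hadjprev
          have e1 : f 1 = wother G (f (i0 - 1)) (f 0) := by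
            apply huniq _ (A1 0)
            intro he
            exact hinj 1 (i0 - 1) (by omega) (by omega) he
          have e2 : u = wother G (f (i0 - 1)) (f 0) := huniq _ hadj hu
          rw [e2, ← e1]
    | succ l =>
        intro u hadj
        by_cases hu : u = f l
        · right
          rw [hu, show l + 1 + i0 - 1 = l + i0 from by omega, hperiod]
        · left
          exact U l u hadj hu
  set Sf : Finset V := (Finset.range i0).image f with hSf
  have hSfclosed : ∀ a b : V, G.Adj a b → a ∈ (↑Sf : Set V) → b ∈ (↑Sf : Set V) := by
    intro a b hab ha
    rw [Finset.coe_image, Set.mem_image] at ha ⊢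
    obtain ⟨m, hm, rfl⟩ := ha
    rw [Finset.coe_range, Set.mem_Iio] at hm
    rcases hNBR m b hab with rfl | rfl
    · exact ⟨(m + 1) % i0, by rw [Finset.coe_range, Set.mem_Iio]; exact Nat.mod_lt _ (by omega),
        hfmod _⟩
    · exact ⟨(m + i0 - 1) % i0, by rw [Finset.coe_range, Set.mem_Iio]; exact Nat.mod_lt _ (by omega),
        hfmod _⟩
  have hSfall : ∀ w : V, w ∈ Sf := by
    intro w
    have hr : G.Reachable v0 w := hconn.preconnected v0 w
    obtain ⟨p⟩ := hr
    have hv0S : v0 ∈ (↑Sf : Set V) := by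
      rw [Finset.coe_image, Set.mem_image]
      exact ⟨0, by rw [Finset.coe_range, Set.mem_Iio]; omega, hf0⟩
    have := support_subset_of_closed hSfclosed p hv0S w (SimpleGraph.Walk.end_mem_support p)
    exact_mod_cast this
  have hinj' : Set.InjOn f (Finset.range i0) := by
    intro p hp q hq hpq
    rw [Finset.coe_range, Set.mem_Iio] at hp hq
    by_contra hne
    rcases Nat.lt_or_ge p q with h | h
    · exact hinj p q h hq hpq
    · exact hinj q p (by omega) hp hpq.symm
  have hcardSf : Sf.card = i0 := by
    rw [hSf, Finset.card_image_of_injOn hinj', Finset.card_range]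
  have hi0n : i0 = n := by
    have h1 : Sf = Finset.univ := Finset.eq_univ_iff_forall.mpr hSfall
    have h2 : Sf.card = Fintype.card V := by rw [h1]; exact Finset.card_univ
    rw [hcardSf] at h2
    exact h2
  have hn3 : 3 ≤ n := by omega
  haveI : NeZero n := ⟨by omega⟩
  have hfi : ∀ a b : ℕ, a < n → b < n → f a = f b → a = b := by
    intro a b ha hb hab
    by_contra hne
    rcases Nat.lt_or_ge a b with h | h
    · exact hinj a b h (by omega) hab
    · exact hinj b a (by omega) (by omega) hab.symm
  have hbij : Function.Bijective (fun p : Fin n => f p.val) := by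
    rw [Fintype.bijective_iff_injective_and_card]
    constructor
    · intro p q hpq
      exact Fin.ext (hfi p.val q.val p.isLt q.isLt hpq)
    · rw [Fintype.card_fin]
  have hadj_iff : ∀ p q : Fin n,
      G.Adj (f p.val) (f q.val) ↔ (SimpleGraph.cycleGraph n).Adj p q := by
    intro p q
    constructor
    · intro hadj
      rcases hNBR p.val (f q.val) hadj with he | he
      · have hqv : q.val = (p.val + 1) % n := by
          apply hfi _ _ q.isLt (Nat.mod_lt _ (by omega : 0 < n))
          have h9 : ((p.val + 1) % n) = ((p.val + 1) % i0) := by rw [hi0n]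
          rw [h9, hfmod]
          exact he
        exact cycle_adj_of_succ hn3 p q hqv
      · have hqv : q.val = (p.val + n - 1) % n := by
          apply hfi _ _ q.isLt (Nat.mod_lt _ (by omega : 0 < n))
          have h9 : ((p.val + n - 1) % n) = ((p.val + i0 - 1) % i0) := by rw [hi0n]
          rw [h9, hfmod]
          exact he
        have hpv := nat_mod_helper hn3 p.isLt q.isLt hqv
        exact (cycle_adj_of_succ hn3 q p hpv).symm
    · intro hadj
      rw [SimpleGraph.cycleGraph_adj'] at hadj
      rcases hadj with h | h
      · have hpq : p = q + 1 := by
          have h1 : p - q = 1 := by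
            apply Fin.ext
            rw [h, Fin.val_one', Nat.mod_eq_of_lt (by omega : 1 < n)]
          have h2 := congrArg (· + q) h1
          simpa [sub_add_cancel, add_comm] using h2
        have hpv : p.val = (q.val + 1) % n := by rw [hpq, fin_succ_val hn3 q]
        have h9 : f p.val = f (q.val + 1) := by
          rw [hpv, show ((q.val + 1) % n) = ((q.val + 1) % i0) from by rw [hi0n], hfmod]
        rw [h9]
        exact (A1 q.val).symm
      · have hpq : q = p + 1 := by
          have h1 : q - p = 1 := by
            apply Fin.ext
            rw [h, Fin.val_one', Nat.mod_eq_of_lt (by omega : 1 < n)]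
          have h2 := congrArg (· + p) h1
          simpa [sub_add_cancel, add_comm] using h2
        have hqv : q.val = (p.val + 1) % n := by rw [hpq, fin_succ_val hn3 p]
        have h9 : f q.val = f (p.val + 1) := by
          rw [hqv, show ((p.val + 1) % n) = ((p.val + 1) % i0) from by rw [hi0n], hfmod]
        rw [h9]
        exact A1 p.val
  exact ⟨(SimpleGraph.Iso.symm
    { toEquiv := Equiv.ofBijective _ hbij,
      map_rel_iff' := by
        intro p q
        exact hadj_iff p q })⟩

end TwoRegular

section Finish

lemma fin_eq_add_one_of_sub {n : ℕ} [NeZero n] (hn : 3 ≤ n) {a b : Fin n} (h : (b - a).val = 1) :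
    b = a + 1 := by
  have h1 : b - a = 1 := by
    apply Fin.ext
    rw [h, Fin.val_one', Nat.mod_eq_of_lt (by omega : 1 < n)]
  have h2 := congrArg (· + a) h1
  simpa [sub_add_cancel, add_comm] using h2

lemma cycle_colorable_even {n : ℕ} (hn : 3 ≤ n) (he : Even n) :
    (SimpleGraph.cycleGraph n).Colorable 2 := by
  haveI : NeZero n := ⟨by omega⟩
  have key : ∀ a b : Fin n, (b - a).val = 1 → ((a.val : ZMod 2) ≠ (b.val : ZMod 2)) := by
    intro a b h
    have hb : b = a + 1 := fin_eq_add_one_of_sub hn h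
    have hbv : b.val = (a.val + 1) % n := by rw [hb, fin_succ_val hn a]
    intro hc
    have hmod : ((a.val + 1) % n) ≡ (a.val + 1) [MOD 2] := by
      obtain ⟨m, hm⟩ := he
      exact (Nat.mod_modEq _ n).of_dvd ⟨m, by omega⟩
    have h2 : (b.val : ZMod 2) = (a.val : ZMod 2) + 1 := by
      rw [hbv]
      have h5 := (ZMod.natCast_eq_natCast_iff ((a.val + 1) % n) (a.val + 1) 2).mpr hmod
      rw [h5]
      push_cast
      ring
    have h3 : (a.val : ZMod 2) = (a.val : ZMod 2) + 1 := hc.trans h2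
    have h4 : (0 : ZMod 2) = 1 := by
      have h6 := congrArg (fun x => x - (a.val : ZMod 2)) h3
      simpa using h6
    exact absurd h4 (by decide)
  have hcol : ∀ {p q : Fin n}, (SimpleGraph.cycleGraph n).Adj p q →
      ((p.val : ZMod 2) ≠ (q.val : ZMod 2)) := by
    intro p q hadj
    rw [SimpleGraph.cycleGraph_adj'] at hadj
    rcases hadj with h | h
    · exact (key q p h).symm
    · exact key p q h
  have C : (SimpleGraph.cycleGraph n).Coloring (ZMod 2) :=
    SimpleGraph.Coloring.mk (fun v => (v.val : ZMod 2)) hcol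
  have := C.colorable
  rwa [ZMod.card 2] at this

lemma colorable_of_iso {W : Type*} [Fintype W] {G : SimpleGraph V} {H : SimpleGraph W}
    (e : G ≃g H) {m : ℕ} (h : H.Colorable m) : G.Colorable m := by
  obtain ⟨C⟩ := h
  exact ⟨SimpleGraph.Coloring.mk (fun v => C (e v))
    (fun hadj => C.valid (e.map_rel_iff.mpr hadj))⟩

end Finish

end BrooksProof

/-- Brooks' theorem: a connected finite simple graph that is regular of degree k,
is not complete, and is not an odd cycle, has chromatic number at most k. -/
theorem brooks {V : Type*} [Fintype V] [DecidableEq V]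
    (Δ : SimpleGraph V) [DecidableRel Δ.Adj] (k : ℕ)
    (hconn : Δ.Connected) (hreg : Δ.IsRegularOfDegree k)
    (hcomplete : Δ ≠ ⊤)
    (hodd : ¬ ∃ n : ℕ, Odd n ∧ Nonempty (Δ ≃g SimpleGraph.cycleGraph n)) :
    Δ.chromaticNumber ≤ (k : ℕ∞) := by
  classical
  have hdeg : ∀ v, Δ.degree v = k := hreg
  match k, hreg, hdeg with
  | 0, hreg, hdeg =>
      exfalso
      apply hcomplete
      have hnoadj : ∀ v w : V, ¬ Δ.Adj v w := by
        intro v w hadj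
        have h1 : 0 < Δ.degree v := by
          rw [← SimpleGraph.card_neighborFinset_eq_degree]
          exact Finset.card_pos.mpr ⟨w, (SimpleGraph.mem_neighborFinset _ _ _).mpr hadj⟩
        rw [hdeg v] at h1
        omega
      have hsub : ∀ x y : V, x = y := by
        intro x y
        have hr : Δ.Reachable x y := hconn.preconnected x y
        obtain ⟨p⟩ := hr
        cases p with
        | nil => rfl
        | cons h q => exact absurd h (hnoadj _ _)
      ext x y
      simp only [SimpleGraph.top_adj]
      exact ⟨fun h => absurd h (hnoadj x y), fun h => absurd (hsub x y) h⟩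
  | 1, hreg, hdeg =>
      exfalso
      apply hcomplete
      have step : ∀ (x y : V) (p : Δ.Walk x y), y = x ∨ Δ.Adj x y := by
        intro x y p
        induction p with
        | nil => exact Or.inl rfl
        | @cons x w y h q ih =>
            rcases ih with rfl | hadj
            · exact Or.inr h
            · left
              have hx : x ∈ Δ.neighborFinset w := by
                rw [SimpleGraph.mem_neighborFinset]; exact h.symm
              have hy : y ∈ Δ.neighborFinset w := by
                rw [SimpleGraph.mem_neighborFinset]; exact hadj
              have hcard : (Δ.neighborFinset w).card ≤ 1 := by
                rw [SimpleGraph.card_neighborFinset_eq_degree, hdeg w]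
              exact (Finset.card_le_one.mp hcard y hy x hx)
      ext x y
      simp only [SimpleGraph.top_adj]
      refine ⟨fun h => h.ne, fun hne => ?_⟩
      obtain ⟨p⟩ := hconn.preconnected x y
      rcases step x y p with rfl | h
      · exact absurd rfl hne
      · exact h
  | 2, hreg, hdeg =>
      obtain ⟨iso⟩ := BrooksProof.two_regular_iso Δ hconn hdeg
      set n := Fintype.card V with hn
      haveI : Nonempty V := hconn.nonempty
      have hn3 : 3 ≤ n := by
        obtain ⟨v⟩ := (inferInstance : Nonempty V)
        have hsub : Δ.neighborFinset v ⊆ Finset.univ.erase v := by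
          intro w hw
          rw [SimpleGraph.mem_neighborFinset] at hw
          exact Finset.mem_erase.mpr ⟨hw.ne', Finset.mem_univ _⟩
        have h1 := Finset.card_le_card hsub
        rw [SimpleGraph.card_neighborFinset_eq_degree, hdeg v,
          Finset.card_erase_of_mem (Finset.mem_univ _), Finset.card_univ] at h1
        have h2 : 0 < Fintype.card V := Fintype.card_pos
        omega
      have heven : Even n := by
        rcases Nat.even_or_odd n with h | h
        · exact h
        · exact absurd ⟨n, h, ⟨iso⟩⟩ hodd
      have hcol : Δ.Colorable 2 :=
        BrooksProof.colorable_of_iso iso (BrooksProof.cycle_colorable_even hn3 heven)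
      exact hcol.chromaticNumber_le
  | (m + 3), hreg, hdeg =>
      have hcol : Δ.Colorable (m + 3) :=
        BrooksProof.colorable_main Δ (by omega) hconn hreg hcomplete
      exact hcol.chromaticNumber_le
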